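/- Let D be the clone of idempotent self-dual Boolean functions (equivalently, the clone generated by the ternary discriminator on {0,1}). For Boolean functions f, g: f ≤_D g if and only if f(0,...,0) = g(0,...,0), f(1,...,1) = g(1,...,1), and Im^[2](f) ⊆ Im^[2](g). There are exactly 16 D-equivalence classes of Boolean functions. -/
import Mathlib

/-- An `n`-indexed operation on `A` has arity `n + 1` (so arities are ≥ 1). -/
abbrev Op (A : Type) (n : ℕ) := (Fin (n + 1) → A) → A

/-- A clone on `A`: a set of finitary operations containing all projections
and closed under composition. -/
structure Clone (A : Type) where
  ops : ∀ n : ℕ, Set (Op A n)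
  proj_mem : ∀ (n : ℕ) (i : Fin (n + 1)), (fun x => x i) ∈ ops n
  comp_mem : ∀ {m n : ℕ} (g : Op A m) (h : Fin (m + 1) → Op A n),
      g ∈ ops m → (∀ i, h i ∈ ops n) → (fun x => g fun i => h i x) ∈ ops n

/-- The set `O_A` of all finitary operations on `A`, of all arities. -/
def Ops (A : Type) := Σ n : ℕ, Op A n

/-- `Minor C f g` : `f` is a `C`-minor of `g`, i.e. `f = g ∘ h` for a tuple `h`
of operations from `C`. -/
def Minor {A : Type} (C : Clone A) (f g : Ops A) : Prop :=
  ∃ h : Fin (g.1 + 1) → Op A f.1,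
    (∀ i, h i ∈ C.ops f.1) ∧ f.2 = fun x => g.2 fun i => h i x

/-- `C`-equivalence: each of `f`, `g` is a `C`-minor of the other. -/
def CEquiv {A : Type} (C : Clone A) (f g : Ops A) : Prop :=
  Minor C f g ∧ Minor C g f

/-- `Im^[2](f)`: the collection of sets `{f(a), f(ā)}` where `ā` is the
componentwise complement of `a`. -/
def Im2 (f : Ops (Fin 2)) : Set (Set (Fin 2)) :=
  {s | ∃ a : Fin (f.1 + 1) → Fin 2, s = {f.2 a, f.2 (fun i => a i + 1)}}

/-! ### Auxiliary material -/

lemma fin2_cases (x : Fin 2) : x = 0 ∨ x = 1 := by revert x; decide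

def cpl {k : ℕ} (a : Fin k → Fin 2) : Fin k → Fin 2 := fun i => a i + 1

lemma add_one_one (x : Fin 2) : x + 1 + 1 = x := by revert x; decide

lemma cpl_cpl {k : ℕ} (a : Fin k → Fin 2) : cpl (cpl a) = a :=
  funext fun _ => add_one_one _

lemma cpl_zero {k : ℕ} : cpl (fun _ : Fin k => (0 : Fin 2)) = fun _ => 1 := rfl

lemma cpl_one {k : ℕ} : cpl (fun _ : Fin k => (1 : Fin 2)) = fun _ => 0 := rfl

lemma pair0 (x y : Fin 2) : (({0} : Set (Fin 2)) = {x, y}) ↔ (x = 0 ∧ y = 0) := by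
  rcases fin2_cases x with rfl|rfl <;> rcases fin2_cases y with rfl|rfl <;>
    simp [Set.ext_iff, Fin.forall_fin_two]

lemma pair1 (x y : Fin 2) : (({1} : Set (Fin 2)) = {x, y}) ↔ (x = 1 ∧ y = 1) := by
  rcases fin2_cases x with rfl|rfl <;> rcases fin2_cases y with rfl|rfl <;>
    simp [Set.ext_iff, Fin.forall_fin_two]

lemma pair01 (x y : Fin 2) : (({0, 1} : Set (Fin 2)) = {x, y}) ↔ x ≠ y := by
  rcases fin2_cases x with rfl|rfl <;> rcases fin2_cases y with rfl|rfl <;>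
    simp [Set.ext_iff, Fin.forall_fin_two]

lemma everyPair (x y : Fin 2) :
    ({x, y} : Set (Fin 2)) = {0} ∨ ({x, y} : Set (Fin 2)) = {1} ∨
      ({x, y} : Set (Fin 2)) = {0, 1} := by
  rcases fin2_cases x with rfl|rfl <;> rcases fin2_cases y with rfl|rfl <;>
    simp [Set.ext_iff, Fin.forall_fin_two]

lemma pair_cases {x1 x2 y1 y2 : Fin 2} (h : ({x1, x2} : Set (Fin 2)) = {y1, y2}) :
    (y1 = x1 ∧ y2 = x2) ∨ (y2 = x1 ∧ y1 = x2) := by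
  rcases fin2_cases x1 with rfl|rfl <;> rcases fin2_cases x2 with rfl|rfl <;>
    rcases fin2_cases y1 with rfl|rfl <;> rcases fin2_cases y2 with rfl|rfl <;>
    simp_all [Set.ext_iff, Fin.forall_fin_two]

/-- membership in `Im2` rephrased with `cpl`. -/
lemma mem_im2 {f : Ops (Fin 2)} {s : Set (Fin 2)} :
    s ∈ Im2 f ↔ ∃ a, s = {f.2 a, f.2 (cpl a)} := Iff.rfl

def P0 (f : Ops (Fin 2)) : Prop := ∃ a, f.2 a = 0 ∧ f.2 (cpl a) = 0
def P1 (f : Ops (Fin 2)) : Prop := ∃ a, f.2 a = 1 ∧ f.2 (cpl a) = 1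
def P2 (f : Ops (Fin 2)) : Prop := ∃ a, f.2 a = 0 ∧ f.2 (cpl a) = 1

instance (f : Ops (Fin 2)) : Decidable (P0 f) := by unfold P0; infer_instance
instance (f : Ops (Fin 2)) : Decidable (P1 f) := by unfold P1; infer_instance
instance (f : Ops (Fin 2)) : Decidable (P2 f) := by unfold P2; infer_instance

lemma mem0_iff (f : Ops (Fin 2)) : ({0} : Set (Fin 2)) ∈ Im2 f ↔ P0 f := by
  rw [mem_im2]
  constructor
  · rintro ⟨a, ha⟩
    exact ⟨a, (pair0 _ _).mp ha⟩
  · rintro ⟨a, h1, h2⟩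
    exact ⟨a, (pair0 _ _).mpr ⟨h1, h2⟩⟩

lemma mem1_iff (f : Ops (Fin 2)) : ({1} : Set (Fin 2)) ∈ Im2 f ↔ P1 f := by
  rw [mem_im2]
  constructor
  · rintro ⟨a, ha⟩
    exact ⟨a, (pair1 _ _).mp ha⟩
  · rintro ⟨a, h1, h2⟩
    exact ⟨a, (pair1 _ _).mpr ⟨h1, h2⟩⟩

lemma mem01_iff (f : Ops (Fin 2)) : ({0, 1} : Set (Fin 2)) ∈ Im2 f ↔ P2 f := by
  rw [mem_im2]
  constructor
  · rintro ⟨a, ha⟩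
    have hne := (pair01 _ _).mp ha
    rcases fin2_cases (f.2 a) with h|h
    · rcases fin2_cases (f.2 (cpl a)) with h'|h'
      · exact absurd (h.trans h'.symm) hne
      · exact ⟨a, h, h'⟩
    · rcases fin2_cases (f.2 (cpl a)) with h'|h'
      · exact ⟨cpl a, h', by rw [cpl_cpl]; exact h⟩
      · exact absurd (h.trans h'.symm) hne
  · rintro ⟨a, h1, h2⟩
    exact ⟨a, (pair01 _ _).mpr (by rw [h1, h2]; decide)⟩

lemma im2_elem {f : Ops (Fin 2)} {s : Set (Fin 2)} (hs : s ∈ Im2 f) :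
    s = {0} ∨ s = {1} ∨ s = {0, 1} := by
  obtain ⟨a, rfl⟩ := hs
  exact everyPair _ _

lemma im2_subset {f g : Ops (Fin 2)} (h0 : P0 f → P0 g) (h1 : P1 f → P1 g)
    (h2 : P2 f → P2 g) : Im2 f ⊆ Im2 g := by
  intro s hs
  rcases im2_elem hs with rfl|rfl|rfl
  · exact (mem0_iff g).mpr (h0 ((mem0_iff f).mp hs))
  · exact (mem1_iff g).mpr (h1 ((mem1_iff f).mp hs))
  · exact (mem01_iff g).mpr (h2 ((mem01_iff f).mp hs))

section Main

variable {D : Clone (Fin 2)}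
  (hD : ∀ n, D.ops n =
      {f : Op (Fin 2) n | f (fun _ => 0) = 0 ∧ f (fun _ => 1) = 1 ∧
        ∀ x, f (fun i => x i + 1) = f x + 1})

include hD

lemma minor_iff (f g : Ops (Fin 2)) : Minor D f g ↔
    (f.2 (fun _ => 0) = g.2 (fun _ => 0) ∧ f.2 (fun _ => 1) = g.2 (fun _ => 1) ∧
      Im2 f ⊆ Im2 g) := by
  constructor
  · rintro ⟨h, hmem, hf⟩
    have hm : ∀ i, h i (fun _ => 0) = 0 ∧ h i (fun _ => 1) = 1 ∧
        ∀ x, h i (fun j => x j + 1) = h i x + 1 := by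
      intro i
      have := hmem i
      rw [hD] at this
      exact this
    refine ⟨?_, ?_, ?_⟩
    · rw [hf]
      have : (fun i => h i (fun _ => 0)) = (fun _ : Fin (g.1 + 1) => (0 : Fin 2)) :=
        funext fun i => (hm i).1
      show g.2 (fun i => h i (fun _ => 0)) = g.2 (fun _ => 0)
      rw [this]
    · rw [hf]
      have : (fun i => h i (fun _ => 1)) = (fun _ : Fin (g.1 + 1) => (1 : Fin 2)) :=
        funext fun i => (hm i).2.1
      show g.2 (fun i => h i (fun _ => 1)) = g.2 (fun _ => 1)
      rw [this]
    · rintro s ⟨a, rfl⟩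
      refine ⟨fun i => h i a, ?_⟩
      have e1 : f.2 a = g.2 (fun i => h i a) := by rw [hf]
      have e2 : f.2 (fun i => a i + 1) = g.2 (fun i => h i a + 1) := by
        rw [hf]
        exact congrArg g.2 (funext fun i => (hm i).2.2 a)
      rw [e1, e2]
  · rintro ⟨h0, h1, hsub⟩
    classical
    have pick : ∀ a : Fin (f.1 + 1) → Fin 2, ∃ b : Fin (g.1 + 1) → Fin 2,
        g.2 b = f.2 a ∧ g.2 (cpl b) = f.2 (cpl a) := by
      intro a
      have hmem : ({f.2 a, f.2 (cpl a)} : Set (Fin 2)) ∈ Im2 g := hsub ⟨a, rfl⟩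
      obtain ⟨c, hc⟩ := hmem
      rcases pair_cases hc with ⟨h1', h2'⟩ | ⟨h2', h1'⟩
      · exact ⟨c, h1', h2'⟩
      · exact ⟨cpl c, h2', by rw [cpl_cpl]; exact h1'⟩
    set B : (Fin (f.1 + 1) → Fin 2) → (Fin (g.1 + 1) → Fin 2) := fun a =>
      if a = (fun _ => 0) then (fun _ => 0) else Classical.choose (pick a) with hBdef
    have hB0 : B (fun _ => 0) = (fun _ => 0) := by rw [hBdef]; simp
    have hB : ∀ a, g.2 (B a) = f.2 a ∧ g.2 (cpl (B a)) = f.2 (cpl a) := by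
      intro a
      by_cases ha : a = (fun _ => 0)
      · subst ha
        rw [hB0]
        refine ⟨h0.symm, ?_⟩
        rw [show (cpl fun _ : Fin (g.1+1) => (0:Fin 2)) = fun _ => 1 from cpl_zero,
          show (cpl fun _ : Fin (f.1+1) => (0:Fin 2)) = fun _ => 1 from cpl_zero]
        exact h1.symm
      · rw [hBdef]
        simp only [if_neg ha]
        exact Classical.choose_spec (pick a)
    refine ⟨fun i a => if a 0 = 0 then B a i else B (cpl a) i + 1, ?_, ?_⟩
    · intro i
      rw [hD]
      refine ⟨?_, ?_, ?_⟩
    -- h i (const 0) = 0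
      · show (if (fun _ : Fin (f.1+1) => (0:Fin 2)) 0 = 0 then B (fun _ => 0) i
          else B (cpl fun _ => 0) i + 1) = 0
        rw [if_pos rfl, hB0]
      · show (if (fun _ : Fin (f.1+1) => (1:Fin 2)) 0 = 0 then B (fun _ => 1) i
          else B (cpl fun _ => 1) i + 1) = 1
        rw [if_neg (show ¬((fun _ : Fin (f.1+1) => (1:Fin 2)) 0 = 0) from
            fun hc => (by decide : ¬((1:Fin 2) = 0)) hc),
          show (cpl fun _ : Fin (f.1+1) => (1:Fin 2)) = fun _ => 0 from cpl_one, hB0]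
        rfl
      · intro x
        show (if cpl x 0 = 0 then B (cpl x) i
            else B (cpl (cpl x)) i + 1) =
          (if x 0 = 0 then B x i else B (cpl x) i + 1) + 1
        have hcx : cpl x 0 = x 0 + 1 := rfl
        rcases fin2_cases (x 0) with hx|hx
        · rw [if_neg (show ¬(cpl x 0 = 0) by rw [hcx, hx]; decide), if_pos hx, cpl_cpl]
        · rw [if_pos (show cpl x 0 = 0 by rw [hcx, hx]; decide),
            if_neg (show ¬(x 0 = 0) by rw [hx]; decide), add_one_one]
    · funext x
      show f.2 x = g.2 fun i => if x 0 = 0 then B x i else B (cpl x) i + 1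
      rcases fin2_cases (x 0) with hx|hx
      · have : (fun i => if x 0 = 0 then B x i else B (cpl x) i + 1) = B x := by
          funext i; rw [if_pos hx]
        rw [this]
        exact (hB x).1.symm
      · have : (fun i => if x 0 = 0 then B x i else B (cpl x) i + 1) = cpl (B (cpl x)) := by
          funext i; rw [if_neg (by rw [hx]; decide)]; rfl
        rw [this]
        have := (hB (cpl x)).2
        rw [cpl_cpl] at this
        exact this.symm

/-! ### The 16 classes -/

end Main

def inv (f : Ops (Fin 2)) : Fin 2 × Fin 2 × Bool × Bool × Bool :=
  (f.2 (fun _ => 0), f.2 (fun _ => 1), decide (P0 f), decide (P1 f), decide (P2 f))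

def valid (t : Fin 2 × Fin 2 × Bool × Bool × Bool) : Prop :=
  (t.1 = 0 → t.2.1 = 0 → t.2.2.1 = true) ∧
  (t.1 = 1 → t.2.1 = 1 → t.2.2.2.1 = true) ∧
  (t.1 ≠ t.2.1 → t.2.2.2.2 = true)

instance : DecidablePred valid := fun t => by unfold valid; infer_instance

lemma valid_inv (f : Ops (Fin 2)) : valid (inv f) := by
  refine ⟨?_, ?_, ?_⟩
  · intro h0 h1
    exact decide_eq_true ⟨fun _ => 0, h0, by rw [cpl_zero]; exact h1⟩
  · intro h0 h1
    exact decide_eq_true ⟨fun _ => 0, h0, by rw [cpl_zero]; exact h1⟩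
  · intro hne
    rcases fin2_cases (f.2 (fun _ => 0)) with h0|h0
    · rcases fin2_cases (f.2 (fun _ => 1)) with h1|h1
      · exact absurd (h0.trans h1.symm) hne
      · exact decide_eq_true ⟨fun _ => 0, h0, by rw [cpl_zero]; exact h1⟩
    · rcases fin2_cases (f.2 (fun _ => 1)) with h1|h1
      · exact decide_eq_true ⟨fun _ => 1, h1, by rw [cpl_one]; exact h0⟩
      · exact absurd (h0.trans h1.symm) hne

section Main2

variable {D : Clone (Fin 2)}
  (hD : ∀ n, D.ops n =
      {f : Op (Fin 2) n | f (fun _ => 0) = 0 ∧ f (fun _ => 1) = 1 ∧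
        ∀ x, f (fun i => x i + 1) = f x + 1})

include hD

lemma ceq_iff (f g : Ops (Fin 2)) : CEquiv D f g ↔ inv f = inv g := by
  rw [CEquiv, minor_iff hD, minor_iff hD]
  constructor
  · rintro ⟨⟨e0, e1, s1⟩, _, _, s2⟩
    have him : Im2 f = Im2 g := Set.Subset.antisymm s1 s2
    have i0 : P0 f ↔ P0 g := by rw [← mem0_iff, ← mem0_iff, him]
    have i1 : P1 f ↔ P1 g := by rw [← mem1_iff, ← mem1_iff, him]
    have i2 : P2 f ↔ P2 g := by rw [← mem01_iff, ← mem01_iff, him]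
    unfold inv
    rw [e0, e1, decide_eq_decide.mpr i0, decide_eq_decide.mpr i1, decide_eq_decide.mpr i2]
  · intro h
    unfold inv at h
    rw [Prod.ext_iff, Prod.ext_iff, Prod.ext_iff, Prod.ext_iff] at h
    obtain ⟨e0, e1, ep, eq', er⟩ := h
    have i0 := decide_eq_decide.mp ep
    have i1 := decide_eq_decide.mp eq'
    have i2 := decide_eq_decide.mp er
    exact ⟨⟨e0, e1, im2_subset i0.mp i1.mp i2.mp⟩,
      e0.symm, e1.symm, im2_subset i0.mpr i1.mpr i2.mpr⟩

end Main2

def rf (a b : Fin 2) (p q r : Bool) : Op (Fin 2) 2 := fun x =>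
  if x 0 = 0 ∧ x 1 = 0 ∧ x 2 = 0 then a
  else if x 0 = 1 ∧ x 1 = 1 ∧ x 2 = 1 then b
  else if x 0 = 0 ∧ x 1 = 0 then (if p then 0 else a)
  else if x 0 = 1 ∧ x 1 = 1 then (if p then 0 else b)
  else if x 1 = 0 ∧ x 2 = 0 then (if q then 1 else a)
  else if x 1 = 1 ∧ x 2 = 1 then (if q then 1 else b)
  else if x 0 = 0 then (if r then 0 else a)
  else (if r then 1 else b)

def realize (t : Fin 2 × Fin 2 × Bool × Bool × Bool) : Ops (Fin 2) :=
  ⟨2, rf t.1 t.2.1 t.2.2.1 t.2.2.2.1 t.2.2.2.2⟩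

lemma inv_realize : ∀ t, valid t → inv (realize t) = t := by decide

theorem D_minor_description {D : Clone (Fin 2)}
    (hD : ∀ n, D.ops n =
      {f : Op (Fin 2) n | f (fun _ => 0) = 0 ∧ f (fun _ => 1) = 1 ∧
        ∀ x, f (fun i => x i + 1) = f x + 1}) :
    (∀ f g : Ops (Fin 2), Minor D f g ↔
      (f.2 (fun _ => 0) = g.2 (fun _ => 0) ∧ f.2 (fun _ => 1) = g.2 (fun _ => 1) ∧
        Im2 f ⊆ Im2 g)) ∧
    Nat.card (Quot (CEquiv D)) = 16 := by
  refine ⟨fun f g => minor_iff hD f g, ?_⟩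
  have e : Quot (CEquiv D) ≃ {t // valid t} :=
    { toFun := Quot.lift (fun f => ⟨inv f, valid_inv f⟩)
        (fun f g hfg => Subtype.ext ((ceq_iff hD f g).mp hfg))
      invFun := fun t => Quot.mk _ (realize t.1)
      left_inv := fun q => Quot.inductionOn q fun f =>
        Quot.sound ((ceq_iff hD _ _).mpr (inv_realize _ (valid_inv f)))
      right_inv := fun t => Subtype.ext (inv_realize t.1 t.2) }
  rw [Nat.card_congr e, Nat.card_eq_fintype_card]
  decide
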